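/- Let p : Quiver.Path u v be a simple path. Then for every x : obj u, every list xs : List (obj u), and every global state σ : S, the map Ψ satisfies the recursion Ψ p (x :: xs, σ) = let (y, σ') := Φ p (x, σ); (ys, σ'') := Ψ p (xs, σ') in (y :: ys, σ''); that is, Ψ p applied to a nonempty list first processes the head through Φ p and then processes the tail through Ψ p with the updated state. -/

import Mathlib

noncomputable section

/-- The type of all arrows of a quiver. -/
abbrev QArr (V : Type) [Quiver.{0} V] : Type := Σ x : V, Σ y : V, x ⟶ y

section STC

variable {V : Type} [Quiver.{0} V] (obj : V → Type) (st : QArr V → Type)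

/-- The global state: one state component per arrow. -/
abbrev GState : Type := ∀ e : QArr V, st e

open Classical in
/-- Update the `e`-component of the global state, leaving the others unchanged. -/
def updState (σ : GState st) (e : QArr V) (x : st e) : GState st :=
  fun e' => if h : e' = e then cast (congrArg st h).symm x else σ e'

variable (φ : ∀ e : QArr V, obj e.1 × st e → obj e.2.1 × st e)

/-- The extension `φ* e` of the fundamental state thread `φ e` to the global state. -/
def phiExt (e : QArr V) : obj e.1 × GState st → obj e.2.1 × GState st :=
  fun z =>
    let r := φ e (z.1, z.2 e)
    (r.1, updState st z.2 e r.2)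

/-- `Φ p` : composite of the extensions `φ*` along the arrows of the path `p`. -/
def Phi {u : V} : ∀ {v : V}, Quiver.Path u v → (obj u × GState st → obj v × GState st)
  | _, .nil => id
  | _, .cons p e => fun z => phiExt obj st φ ⟨_, _, e⟩ (Phi p z)

/-- `ψ e` (curried auxiliary version): the stateful list map of `φ e`. -/
def psiAux (e : QArr V) : List (obj e.1) → st e → List (obj e.2.1) × st e
  | [], σ => ([], σ)
  | x :: xs, σ =>
    let r := φ e (x, σ)
    let r' := psiAux e xs r.2
    (r.1 :: r'.1, r'.2)

/-- `ψ e` : the stateful list map of the fundamental state thread `φ e`. -/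
def psi (e : QArr V) : List (obj e.1) × st e → List (obj e.2.1) × st e :=
  fun z => psiAux obj st φ e z.1 z.2

/-- The extension `ψ* e` of `ψ e` to the global state. -/
def psiExt (e : QArr V) : List (obj e.1) × GState st → List (obj e.2.1) × GState st :=
  fun z =>
    let r := psi obj st φ e (z.1, z.2 e)
    (r.1, updState st z.2 e r.2)

/-- `Ψ p` : composite of the extensions `ψ*` along the arrows of the path `p`. -/
def Psi {u : V} : ∀ {v : V}, Quiver.Path u v → (List (obj u) × GState st → List (obj v) × GState st)
  | _, .nil => id
  | _, .cons p e => fun z => psiExt obj st φ ⟨_, _, e⟩ (Psi p z)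

/-- The list of arrows (as elements of `QArr V`) occurring in a path. -/
def pathArrows {u : V} : ∀ {v : V}, Quiver.Path u v → List (QArr V)
  | _, .nil => []
  | _, .cons p e => ⟨_, _, e⟩ :: pathArrows p

/-- A path is simple if its arrows are pairwise distinct as elements of `QArr V`. -/
def SimplePath {u v : V} (p : Quiver.Path u v) : Prop := (pathArrows p).Nodup

/-- The stateful list map of a function `F : α × S → β × S` (auxiliary curried form). -/
def stmapAux {α β S : Type} (F : α × S → β × S) : List α → S → List β × S
  | [], σ => ([], σ)
  | x :: xs, σ =>
    let r := F (x, σ)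
    let r' := stmapAux F xs r.2
    (r.1 :: r'.1, r'.2)

/-- The stateful list map of a function `F : α × S → β × S`. -/
def stmap {α β S : Type} (F : α × S → β × S) : List α × S → List β × S :=
  fun z => stmapAux F z.1 z.2

end STC

section Helpers

variable {V : Type} [Quiver.{0} V] {obj : V → Type} {st : QArr V → Type}
  (φ : ∀ e : QArr V, obj e.1 × st e → obj e.2.1 × st e)

theorem updState_ne (σ : GState st) {e f : QArr V} (h : f ≠ e) (x : st e) :
    updState st σ e x f = σ f := by
  simp [updState, h]

theorem updState_same (σ : GState st) (e : QArr V) (x : st e) :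
    updState st σ e x e = x := by
  simp [updState]

theorem updState_updState_same (σ : GState st) (e : QArr V) (x y : st e) :
    updState st (updState st σ e x) e y = updState st σ e y := by
  funext f
  by_cases h : f = e <;> simp [updState, h]

theorem updState_comm (σ : GState st) {e f : QArr V} (h : e ≠ f) (x : st e) (y : st f) :
    updState st (updState st σ e x) f y = updState st (updState st σ f y) e x := by
  funext g
  by_cases h1 : g = e
  · subst h1
    have h2 : g ≠ f := fun hh => h hh
    simp [updState, h2]
  · by_cases h2 : g = f
    · subst h2
      simp [updState, h1]
    · simp [updState, h1, h2]

theorem Phi_upd {u v : V} (p : Quiver.Path u v) (e : QArr V)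
    (he : e ∉ pathArrows p) (x : obj u) (σ : GState st) (s : st e) :
    Phi obj st φ p (x, updState st σ e s) =
      ((Phi obj st φ p (x, σ)).1, updState st (Phi obj st φ p (x, σ)).2 e s) := by
  induction p with
  | nil => rfl
  | cons q f ih =>
    simp only [pathArrows, List.mem_cons, not_or] at he
    obtain ⟨hne, he⟩ := he
    simp only [Phi, ih he, phiExt]
    rw [updState_ne _ (fun hh => hne hh.symm), updState_comm _ hne]

theorem Phi_state_ne {u v : V} (p : Quiver.Path u v) (e : QArr V)
    (he : e ∉ pathArrows p) (x : obj u) (σ : GState st) :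
    (Phi obj st φ p (x, σ)).2 e = σ e := by
  induction p with
  | nil => rfl
  | cons q f ih =>
    simp only [pathArrows, List.mem_cons, not_or] at he
    obtain ⟨hne, he⟩ := he
    simp only [Phi, phiExt]
    rw [updState_ne _ hne, ih he]

theorem Psi_upd {u v : V} (p : Quiver.Path u v) (e : QArr V)
    (he : e ∉ pathArrows p) (xs : List (obj u)) (σ : GState st) (s : st e) :
    Psi obj st φ p (xs, updState st σ e s) =
      ((Psi obj st φ p (xs, σ)).1, updState st (Psi obj st φ p (xs, σ)).2 e s) := by
  induction p with
  | nil => rfl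
  | cons q f ih =>
    simp only [pathArrows, List.mem_cons, not_or] at he
    obtain ⟨hne, he⟩ := he
    simp only [Psi, ih he, psiExt]
    rw [updState_ne _ (fun hh => hne hh.symm), updState_comm _ hne]

theorem Psi_state_ne {u v : V} (p : Quiver.Path u v) (e : QArr V)
    (he : e ∉ pathArrows p) (xs : List (obj u)) (σ : GState st) :
    (Psi obj st φ p (xs, σ)).2 e = σ e := by
  induction p with
  | nil => rfl
  | cons q f ih =>
    simp only [pathArrows, List.mem_cons, not_or] at he
    obtain ⟨hne, he⟩ := he
    simp only [Psi, psiExt]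
    rw [updState_ne _ hne, ih he]

end Helpers

/-- on a simple path, `Ψ p` satisfies the head/tail recursion
governed by `Φ p`. -/
theorem Psi_cons_of_simple {V : Type} [Quiver.{0} V] (obj : V → Type) (st : QArr V → Type)
    (φ : ∀ e : QArr V, obj e.1 × st e → obj e.2.1 × st e)
    (u v : V) (p : Quiver.Path u v) (hp : SimplePath p)
    (x : obj u) (xs : List (obj u)) (σ : GState st) :
    Psi obj st φ p (x :: xs, σ) =
      (let r := Phi obj st φ p (x, σ)
       let r' := Psi obj st φ p (xs, r.2)
       (r.1 :: r'.1, r'.2)) := by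
  induction p with
  | nil => rfl
  | cons q f ih =>
    simp only [SimplePath, pathArrows, List.nodup_cons] at hp
    obtain ⟨hne, hnd⟩ := hp
    simp only [Psi, Phi, phiExt]
    rw [ih hnd, Psi_upd φ q _ hne]
    simp only [psiExt, psi, psiAux, updState_same, updState_updState_same,
      Phi_state_ne φ q _ hne, Psi_state_ne φ q _ hne]
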